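/- The map σ satisfies the multiplicativity conditions σ ∘ (id ⊗ m) = (m ⊗ id) ∘ (id ⊗ σ) ∘ (σ ⊗ id) and σ ∘ (m ⊗ id) = (id ⊗ m) ∘ (σ ⊗ id) ∘ (id ⊗ σ), as k-linear maps U ⊗_k U ⊗_k U → U ⊗_k U, where m : U ⊗_k U → U is the multiplication map of U. -/

import Mathlib

open scoped TensorProduct

/-- The Cartan matrix of type `A_n`. -/
def cartanA (n : ℕ) (i j : Fin n) : ℤ :=
  if i = j then 2
  else if (i : ℕ) + 1 = (j : ℕ) ∨ (j : ℕ) + 1 = (i : ℕ) then -1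
  else 0

/-- For `α, γ ∈ ℕⁿ`, `c(α,γ) = ∑_{i,j} a_{ij} α_i γ_j` with `A` the Cartan matrix
of type `A_n`. -/
def cpair {n : ℕ} (α γ : Fin n → ℕ) : ℤ :=
  ∑ i : Fin n, ∑ j : Fin n, cartanA n i j * (α i : ℤ) * (γ j : ℤ)

/-- The quantum Serre relations of type `A_n` hold for the family `y`. -/
def serreCond (k : Type) [CommRing k] (q : kˣ) {n : ℕ} {B : Type} [Ring B] [Algebra k B]
    (y : Fin n → B) : Prop :=
  (∀ i j : Fin n, 1 < |((i : ℕ) : ℤ) - ((j : ℕ) : ℤ)| → y i * y j = y j * y i) ∧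
  (∀ i j : Fin n, |((i : ℕ) : ℤ) - ((j : ℕ) : ℤ)| = 1 →
    y i ^ 2 * y j - ((q : k) + ((q⁻¹ : kˣ) : k)) • (y i * y j * y i) + y j * y i ^ 2 = 0)

/-- `U`, with distinguished generators `x`, is a presentation of `U_q^+(sl_{n+1})`:
the quotient of the free associative unital `k`-algebra on `x_1, …, x_n` by the
two-sided ideal generated by the quantum Serre relations.  This is expressed by:
the relations hold in `U`, the `x i` generate `U`, and `U` has the corresponding
universal (lifting) property. -/
def IsUqPlus (k : Type) [CommRing k] (q : kˣ) {n : ℕ} (U : Type) [Ring U] [Algebra k U]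
    (x : Fin n → U) : Prop :=
  serreCond k q x ∧ Algebra.adjoin k (Set.range x) = ⊤ ∧
    ∀ (B : Type) [Ring B] [Algebra k B] (y : Fin n → B),
      serreCond k q y → ∃ f : U →ₐ[k] B, ∀ i, f (x i) = y i

/-- The map `s ⊗ id` acting on the first two factors of `V ⊗ (V ⊗ V)`. -/
noncomputable def map12 (k V : Type) [CommRing k] [AddCommGroup V] [Module k V]
    (s : V ⊗[k] V →ₗ[k] V ⊗[k] V) :
    V ⊗[k] (V ⊗[k] V) →ₗ[k] V ⊗[k] (V ⊗[k] V) :=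
  (TensorProduct.assoc k V V V).toLinearMap ∘ₗ (TensorProduct.map s LinearMap.id) ∘ₗ
    (TensorProduct.assoc k V V V).symm.toLinearMap

/-- The multiplication on the first two factors, `m ⊗ id : U ⊗ U ⊗ U → U ⊗ U`. -/
noncomputable def mulFst (k U : Type) [CommRing k] [Ring U] [Algebra k U] :
    U ⊗[k] (U ⊗[k] U) →ₗ[k] U ⊗[k] U :=
  TensorProduct.map (LinearMap.mul' k U) LinearMap.id ∘ₗ
    (TensorProduct.assoc k U U U).symm.toLinearMap

lemma cpair_add_left {n : ℕ} (α β γ : Fin n → ℕ) :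
    cpair (α + β) γ = cpair α γ + cpair β γ := by
  unfold cpair
  rw [← Finset.sum_add_distrib]
  refine Finset.sum_congr rfl fun i _ => ?_
  rw [← Finset.sum_add_distrib]
  refine Finset.sum_congr rfl fun j _ => ?_
  simp only [Pi.add_apply]
  push_cast; ring

lemma cpair_add_right {n : ℕ} (α β γ : Fin n → ℕ) :
    cpair α (β + γ) = cpair α β + cpair α γ := by
  unfold cpair
  rw [← Finset.sum_add_distrib]
  refine Finset.sum_congr rfl fun i _ => ?_
  rw [← Finset.sum_add_distrib]
  refine Finset.sum_congr rfl fun j _ => ?_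
  simp only [Pi.add_apply]
  push_cast; ring

lemma ext3 {k U W : Type} [CommRing k] [AddCommGroup U] [Module k U] [AddCommGroup W] [Module k W]
    (f g : U ⊗[k] (U ⊗[k] U) →ₗ[k] W)
    (h : ∀ a b c : U, f (a ⊗ₜ[k] (b ⊗ₜ[k] c)) = g (a ⊗ₜ[k] (b ⊗ₜ[k] c))) : f = g := by
  apply TensorProduct.ext'
  intro a y
  induction y using TensorProduct.induction_on with
  | zero => simp
  | tmul b c => exact h a b c
  | add y₁ y₂ h₁ h₂ => simp [TensorProduct.tmul_add, map_add, h₁, h₂]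


/-- `σ` satisfies the multiplicativity conditions
`σ ∘ (id ⊗ m) = (m ⊗ id) ∘ (id ⊗ σ) ∘ (σ ⊗ id)` and
`σ ∘ (m ⊗ id) = (id ⊗ m) ∘ (σ ⊗ id) ∘ (id ⊗ σ)`
as `k`-linear maps `U ⊗ U ⊗ U → U ⊗ U`, `m` being the multiplication of `U`. -/
theorem stmt8 (k U : Type) [CommRing k] (q : kˣ) (n : ℕ) (hn : 1 ≤ n)
    [Ring U] [Algebra k U] (x : Fin n → U) (hU : IsUqPlus k q U x)
    (𝒜 : (Fin n → ℕ) → Submodule k U) [GradedAlgebra 𝒜]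
    (hx𝒜 : ∀ i : Fin n, x i ∈ 𝒜 (Pi.single i 1))
    (σ : U ⊗[k] U →ₗ[k] U ⊗[k] U)
    (hσ : ∀ (α γ : Fin n → ℕ) (a b : U), a ∈ 𝒜 α → b ∈ 𝒜 γ →
      σ (a ⊗ₜ[k] b) = ((q ^ cpair α γ : kˣ) : k) • (b ⊗ₜ[k] a)) :
    σ ∘ₗ TensorProduct.map LinearMap.id (LinearMap.mul' k U) =
      mulFst k U ∘ₗ TensorProduct.map LinearMap.id σ ∘ₗ map12 k U σ ∧
    σ ∘ₗ mulFst k U =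
      TensorProduct.map LinearMap.id (LinearMap.mul' k U) ∘ₗ map12 k U σ ∘ₗ
        TensorProduct.map LinearMap.id σ := by
  have key : ∀ (F G : U ⊗[k] (U ⊗[k] U) →ₗ[k] U ⊗[k] U),
      (∀ (α β γ : Fin n → ℕ) (a b c : U), a ∈ 𝒜 α → b ∈ 𝒜 β → c ∈ 𝒜 γ →
        F (a ⊗ₜ[k] (b ⊗ₜ[k] c)) = G (a ⊗ₜ[k] (b ⊗ₜ[k] c))) → F = G := by
    intro F G hFG
    apply ext3
    intro a b c
    refine DirectSum.Decomposition.inductionOn 𝒜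
      (motive := fun a => ∀ b c : U, F (a ⊗ₜ[k] (b ⊗ₜ[k] c)) = G (a ⊗ₜ[k] (b ⊗ₜ[k] c)))
      (by intro b c; simp) ?_ ?_ a b c
    · rintro α ⟨a, ha⟩ b c
      refine DirectSum.Decomposition.inductionOn 𝒜
        (motive := fun b => ∀ c : U, F (a ⊗ₜ[k] (b ⊗ₜ[k] c)) = G (a ⊗ₜ[k] (b ⊗ₜ[k] c)))
        (by intro c; simp) ?_ ?_ b c
      · rintro β ⟨b, hb⟩ c
        refine DirectSum.Decomposition.inductionOn 𝒜
          (motive := fun c => F (a ⊗ₜ[k] (b ⊗ₜ[k] c)) = G (a ⊗ₜ[k] (b ⊗ₜ[k] c)))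
          (by simp) ?_ ?_ c
        · rintro γ ⟨c, hc⟩
          exact hFG α β γ a b c ha hb hc
        · intro u v hu hv
          simp only [TensorProduct.tmul_add, map_add, hu, hv]
      · intro u v hu hv c
        simp only [TensorProduct.tmul_add, TensorProduct.add_tmul, map_add, hu c, hv c]
    · intro u v hu hv b c
      simp only [TensorProduct.add_tmul, map_add, hu b c, hv b c]
  constructor
  · apply key
    intro α β γ a b c ha hb hc
    have hbc : b * c ∈ 𝒜 (β + γ) := SetLike.mul_mem_graded hb hc
    simp only [LinearMap.comp_apply, map12, mulFst, LinearEquiv.coe_coe,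
      TensorProduct.map_tmul, LinearMap.id_apply, LinearMap.mul'_apply,
      TensorProduct.assoc_symm_tmul, TensorProduct.assoc_tmul]
    rw [hσ _ _ _ _ ha hbc, hσ _ _ _ _ ha hb]
    simp only [map_smul, TensorProduct.tmul_smul, ← TensorProduct.smul_tmul',
      LinearMap.comp_apply, LinearEquiv.coe_coe, TensorProduct.map_tmul,
      LinearMap.id_apply, TensorProduct.assoc_tmul, TensorProduct.assoc_symm_tmul,
      LinearMap.mul'_apply]
    rw [hσ _ _ _ _ ha hc]
    simp only [map_smul, TensorProduct.tmul_smul, ← TensorProduct.smul_tmul',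
      LinearMap.comp_apply, LinearEquiv.coe_coe, TensorProduct.map_tmul,
      LinearMap.id_apply, TensorProduct.assoc_symm_tmul, LinearMap.mul'_apply]
    rw [cpair_add_right, zpow_add, Units.val_mul, mul_smul]
  · apply key
    intro α β γ a b c ha hb hc
    have hab : a * b ∈ 𝒜 (α + β) := SetLike.mul_mem_graded ha hb
    simp only [LinearMap.comp_apply, map12, mulFst, LinearEquiv.coe_coe,
      TensorProduct.map_tmul, LinearMap.id_apply, LinearMap.mul'_apply,
      TensorProduct.assoc_symm_tmul, TensorProduct.assoc_tmul]
    rw [hσ _ _ _ _ hab hc, hσ _ _ _ _ hb hc]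
    simp only [map_smul, TensorProduct.tmul_smul, ← TensorProduct.smul_tmul',
      LinearMap.comp_apply, LinearEquiv.coe_coe, TensorProduct.map_tmul,
      LinearMap.id_apply, TensorProduct.assoc_tmul, TensorProduct.assoc_symm_tmul,
      LinearMap.mul'_apply]
    rw [hσ _ _ _ _ ha hc]
    simp only [map_smul, TensorProduct.tmul_smul, ← TensorProduct.smul_tmul',
      LinearMap.comp_apply, LinearEquiv.coe_coe, TensorProduct.map_tmul,
      LinearMap.id_apply, TensorProduct.assoc_tmul, TensorProduct.assoc_symm_tmul,
      LinearMap.mul'_apply]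
    rw [cpair_add_left, zpow_add, Units.val_mul, mul_smul, smul_comm]
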